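/- Under the assumptions 0 < p_{x,L}, p_{x,R} < 1, ν₂ = p_{x,L} - p_{x,R} constant with 0 < |ν₂| < 1, and (if ν₂ < 0) every eigenvalue λ of B satisfies √(-4ν₂)/(1-ν₂) < |λ| ≤ 1, the limiting distribution of the CRW on P_{n+1} exists, is independent of the initial state, and is given by p_∞(0) = (1 + ∑_{x=1}^n ∏_{y=0}^{x-1}(1-p_{y,L})/∏_{y=1}^x p_{y,R})⁻¹ and p_∞(x) = (∏_{y=0}^{x-1}(1-p_{y,L})/∏_{y=1}^x p_{y,R}) · p_∞(0). -/

import Mathlib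

/-- The shift operator `S` of the CRW on the path `P_{n+1}`, acting on states
`ψ : Fin (n+1) × Fin 2 → ℝ` where the coin index `0` stands for `L` and `1` for `R`. -/
def crwS (n : ℕ) (ψ : Fin (n + 1) × Fin 2 → ℝ) : Fin (n + 1) × Fin 2 → ℝ :=
  fun p =>
    if p.2 = 0 then
      -- component on |y, L⟩ : comes from |y-1, R⟩, or from |0, L⟩ when y = 0
      if (p.1 : ℕ) = 0 then ψ (0, 0)
      else ψ (⟨(p.1 : ℕ) - 1, Nat.lt_of_le_of_lt (Nat.sub_le _ _) p.1.isLt⟩, 1)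
    else
      -- component on |y, R⟩ : comes from |y+1, L⟩, or from |n, R⟩ when y = n
      if h : (p.1 : ℕ) = n then ψ (p.1, 1)
      else ψ (⟨(p.1 : ℕ) + 1, by have := p.1.isLt; omega⟩, 0)

/-- The coin operator `C` of the CRW on the path `P_{n+1}`, with coins
`C_x = [[p_{x,L}, p_{x,R}], [1 - p_{x,L}, 1 - p_{x,R}]]`. -/
def crwC (n : ℕ) (pL pR : ℕ → ℝ) (ψ : Fin (n + 1) × Fin 2 → ℝ) :
    Fin (n + 1) × Fin 2 → ℝ :=
  fun p =>
    if p.2 = 0 then pL p.1 * ψ (p.1, 0) + pR p.1 * ψ (p.1, 1)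
    else (1 - pL p.1) * ψ (p.1, 0) + (1 - pR p.1) * ψ (p.1, 1)

/-- The time evolution operator `U = SC` of the CRW on the path `P_{n+1}`. -/
def crwU (n : ℕ) (pL pR : ℕ → ℝ) (ψ : Fin (n + 1) × Fin 2 → ℝ) :
    Fin (n + 1) × Fin 2 → ℝ :=
  crwS n (crwC n pL pR ψ)

/-- The Jacobi-type matrix `B` associated to the CRW on the path `P_{n+1}`. -/
noncomputable def jacB (n : ℕ) (qL qR : ℕ → ℝ) : Matrix (Fin (n + 1)) (Fin (n + 1)) ℝ :=
  Matrix.of fun i j =>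
    if (j : ℕ) + 1 = (i : ℕ) then qL i / Real.sqrt 2
    else if (i : ℕ) + 1 = (j : ℕ) then -qR i / Real.sqrt 2
    else if (i : ℕ) = 0 ∧ (j : ℕ) = 0 then -qL 0 / Real.sqrt 2
    else if (i : ℕ) = n ∧ (j : ℕ) = n then qR n / Real.sqrt 2
    else 0

/-- The ratio `∏_{y=0}^{x-1}(1-p_{y,L}) / ∏_{y=1}^{x} p_{y,R}`. -/
noncomputable def crwRatio (pL pR : ℕ → ℝ) (x : ℕ) : ℝ :=
  (∏ y ∈ Finset.range x, (1 - pL y)) / ∏ y ∈ Finset.Icc 1 x, pR y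

/-- The limiting distribution `p_∞` of the CRW on `P_{n+1}`. -/
noncomputable def crwLimit (n : ℕ) (pL pR : ℕ → ℝ) (x : ℕ) : ℝ :=
  crwRatio pL pR x * (1 + ∑ z ∈ Finset.Icc 1 n, crwRatio pL pR z)⁻¹

noncomputable section

noncomputable section
namespace CRW
variable (n : ℕ) (pL pR : ℕ → ℝ)

def σ : Fin (n+1) × Fin 2 → Fin (n+1) × Fin 2 := fun p =>
  if p.2 = 0 then
    if (p.1 : ℕ) = 0 then (0, 0)
    else (⟨(p.1 : ℕ) - 1, Nat.lt_of_le_of_lt (Nat.sub_le _ _) p.1.isLt⟩, 1)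
  else
    if h : (p.1 : ℕ) = n then (p.1, 1)
    else (⟨(p.1 : ℕ) + 1, by have := p.1.isLt; omega⟩, 0)

lemma crwS_eq (ψ) (p) : crwS n ψ p = ψ (σ n p) := by
  rcases p with ⟨x, c⟩
  unfold crwS σ
  split_ifs <;> rfl

lemma σ_bij : Function.Bijective (σ n) := by
  rw [← Finite.injective_iff_bijective]
  rintro ⟨⟨x, hx⟩, c⟩ ⟨⟨y, hy⟩, d⟩ hab
  have hc := c.isLt
  have hd := d.isLt
  unfold σ at hab
  split_ifs at hab <;>
    simp only [Prod.ext_iff, Fin.ext_iff, Fin.val_zero, Fin.val_one] at * <;> omega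

lemma crwU_sum (ψ) : ∑ p, crwU n pL pR ψ p = ∑ p, ψ p := by
  unfold crwU
  have h1 : ∑ p, crwS n (crwC n pL pR ψ) p = ∑ p, crwC n pL pR ψ p := by
    rw [show (fun p => crwS n (crwC n pL pR ψ) p) = (fun p => crwC n pL pR ψ (σ n p)) from
      funext (crwS_eq n _)] at *
    exact Fintype.sum_bijective (σ n) (σ_bij n) _ _ (fun _ => rfl)
  rw [h1]
  rw [Fintype.sum_prod_type, Fintype.sum_prod_type]
  refine Finset.sum_congr rfl fun x _ => ?_
  rw [Fin.sum_univ_two, Fin.sum_univ_two]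
  simp [crwC]
  ring

lemma crwU_nonneg (hL : ∀ y ≤ n, 0 < pL y ∧ pL y < 1) (hR : ∀ y ≤ n, 0 < pR y ∧ pR y < 1)
    (ψ) (hψ : ∀ p, 0 ≤ ψ p) (p) : 0 ≤ crwU n pL pR ψ p := by
  have key : ∀ q : Fin (n+1) × Fin 2, 0 ≤ crwC n pL pR ψ q := by
    rintro ⟨x, c⟩
    have hx : (x : ℕ) ≤ n := by omega
    obtain ⟨h1, h2⟩ := hL x hx
    obtain ⟨h3, h4⟩ := hR x hx
    unfold crwC
    dsimp only
    split_ifs <;>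
      [skip; skip] <;>
      · apply add_nonneg <;> apply mul_nonneg <;> first | exact hψ _ | linarith
  rw [crwU, crwS_eq]
  exact key _
def Uℓ : ((Fin (n+1) × Fin 2) → ℝ) →ₗ[ℝ] ((Fin (n+1) × Fin 2) → ℝ) where
  toFun := crwU n pL pR
  map_add' ψ χ := by
    funext p
    simp only [crwU, crwS, crwC, Pi.add_apply]
    split_ifs <;> ring
  map_smul' c ψ := by
    funext p
    simp only [crwU, crwS, crwC, Pi.smul_apply, smul_eq_mul, RingHom.id_apply]
    split_ifs <;> ring

def M : Matrix (Fin (n+1) × Fin 2) (Fin (n+1) × Fin 2) ℝ := LinearMap.toMatrix' (Uℓ n pL pR)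

lemma M_mulVec (ψ) : (M n pL pR).mulVec ψ = crwU n pL pR ψ := by
  rw [M, ← Matrix.toLin'_apply, Matrix.toLin'_toMatrix']; rfl

lemma M_apply (p q) : M n pL pR p q = crwU n pL pR (fun k => if k = q then 1 else 0) p :=
  by rw [M, LinearMap.toMatrix'_apply]; show crwU n pL pR _ p = _; congr 1; funext k; simp [Pi.single_apply]

lemma M_pow_mulVec (t : ℕ) (φ) : ((M n pL pR)^t).mulVec φ = (crwU n pL pR)^[t] φ := by
  induction t generalizing φ with
  | zero => simp
  | succ t ih =>
    rw [pow_succ, ← Matrix.mulVec_mulVec, M_mulVec, ih, Function.iterate_succ_apply]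
lemma E00 : M n pL pR (0,0) (0,0) = pL 0 := by
  rw [M_apply]
  simp [crwU, crwS, crwC, Prod.ext_iff, Fin.ext_iff]

lemma E01 : M n pL pR (0,0) (0,1) = pR 0 := by
  rw [M_apply]
  simp [crwU, crwS, crwC, Prod.ext_iff, Fin.ext_iff]

-- source (x+1, c) → target (x, 1), for x < n
lemma E1L (x : ℕ) (hx : x < n) (h1 : x < n + 1) (h2 : x + 1 < n + 1) :
    M n pL pR (⟨x, h1⟩, 1) (⟨x+1, h2⟩, 0) = pL (x+1) := by
  rw [M_apply]
  simp only [crwU, crwS, crwC]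
  norm_num [Prod.ext_iff, Fin.ext_iff]
  omega

lemma E1R (x : ℕ) (hx : x < n) (h1 : x < n + 1) (h2 : x + 1 < n + 1) :
    M n pL pR (⟨x, h1⟩, 1) (⟨x+1, h2⟩, 1) = pR (x+1) := by
  rw [M_apply]
  simp only [crwU, crwS, crwC]
  norm_num [Prod.ext_iff, Fin.ext_iff]
  omega

-- source (x, 0) → target (x+1, 0)
lemma E2 (x : ℕ) (h1 : x < n + 1) (h2 : x + 1 < n + 1) :
    M n pL pR (⟨x+1, h2⟩, 0) (⟨x, h1⟩, 0) = 1 - pL x := by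
  rw [M_apply]
  simp only [crwU, crwS, crwC]
  norm_num [Prod.ext_iff, Fin.ext_iff]

-- source (n, 0) → target (n, 1)
lemma E3 (h1 : n < n + 1) :
    M n pL pR (⟨n, h1⟩, 1) (⟨n, h1⟩, 0) = 1 - pL n := by
  rw [M_apply]
  simp only [crwU, crwS, crwC]
  norm_num [Prod.ext_iff, Fin.ext_iff]

lemma M_nonneg (hL : ∀ y ≤ n, 0 < pL y ∧ pL y < 1) (hR : ∀ y ≤ n, 0 < pR y ∧ pR y < 1)
    (p q) : 0 ≤ M n pL pR p q := by
  rw [M_apply]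
  exact crwU_nonneg n pL pR hL hR _ (fun k => by split <;> norm_num) p

section pos
variable (hL : ∀ y ≤ n, 0 < pL y ∧ pL y < 1) (hR : ∀ y ≤ n, 0 < pR y ∧ pR y < 1)

lemma mul_entry_pos {A B : Matrix (Fin (n+1) × Fin 2) (Fin (n+1) × Fin 2) ℝ}
    (hA : ∀ p q, 0 ≤ A p q) (hB : ∀ p q, 0 ≤ B p q) (p m q)
    (h1 : 0 < A p m) (h2 : 0 < B m q) : 0 < (A * B) p q := by
  rw [Matrix.mul_apply]
  have : A p m * B m q ≤ ∑ m', A p m' * B m' q :=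
    Finset.single_le_sum (f := fun m' => A p m' * B m' q)
      (fun i _ => mul_nonneg (hA _ _) (hB _ _)) (Finset.mem_univ m)
  nlinarith

include hL hR

lemma Mpow_nonneg (t : ℕ) (p q) : 0 ≤ ((M n pL pR)^t) p q := by
  induction t generalizing p q with
  | zero => rw [pow_zero, Matrix.one_apply]; split <;> norm_num
  | succ t ih =>
    rw [pow_succ, Matrix.mul_apply]
    exact Finset.sum_nonneg fun m _ => mul_nonneg (ih p m) (M_nonneg n pL pR hL hR m q)


lemma loop (t : ℕ) : 0 < ((M n pL pR)^t) (0,0) (0,0) := by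
  induction t with
  | zero => rw [pow_zero, Matrix.one_apply_eq]; norm_num
  | succ t ih =>
    rw [pow_succ]
    exact mul_entry_pos n (Mpow_nonneg n pL pR hL hR t) (M_nonneg n pL pR hL hR)
      _ (0,0) _ ih (by rw [E00]; exact (hL 0 (by omega)).1)

lemma claimA : ∀ x (h1 : x < n + 1) (c : Fin 2), 0 < ((M n pL pR)^(x+1)) (0,0) (⟨x,h1⟩, c) := by
  intro x
  induction x with
  | zero =>
    intro h1 c
    have h0 : (⟨0, h1⟩ : Fin (n+1)) = 0 := rfl
    rw [pow_one, h0]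
    have hc : c = 0 ∨ c = 1 := by omega
    rcases hc with rfl | rfl
    · rw [E00]; exact (hL 0 (by omega)).1
    · rw [E01]; exact (hR 0 (by omega)).1
  | succ x ih =>
    intro h1 c
    have hx : x < n := by omega
    have hx1 : x < n + 1 := by omega
    rw [pow_succ]
    refine mul_entry_pos n (Mpow_nonneg n pL pR hL hR _) (M_nonneg n pL pR hL hR)
      _ (⟨x, hx1⟩, 1) _ (ih hx1 1) ?_
    have hc : c = 0 ∨ c = 1 := by omega
    rcases hc with rfl | rfl
    · rw [E1L n pL pR x hx]; exact (hL (x+1) (by omega)).1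
    · rw [E1R n pL pR x hx]; exact (hR (x+1) (by omega)).1

lemma claimA_pad (x : ℕ) (h1 : x < n + 1) (c : Fin 2) (t : ℕ) (ht : x + 1 ≤ t) :
    0 < ((M n pL pR)^t) (0,0) (⟨x,h1⟩, c) := by
  have h : (M n pL pR)^t = (M n pL pR)^(t-(x+1)) * (M n pL pR)^(x+1) := by
    rw [← pow_add]; congr 1; omega
  rw [h]
  exact mul_entry_pos n (Mpow_nonneg n pL pR hL hR _) (Mpow_nonneg n pL pR hL hR _)
    _ (0,0) _ (loop n pL pR hL hR _) (claimA n pL pR hL hR x h1 c)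

lemma claimB1 : ∀ x (hx : x ≤ n) (h1 : x < n + 1), 0 < ((M n pL pR)^x) (⟨x,h1⟩,0) (0,0) := by
  intro x
  induction x with
  | zero =>
    intro hx h1
    have h0 : ((⟨0, h1⟩ : Fin (n+1)), (0 : Fin 2)) = ((0 : Fin (n+1)), (0 : Fin 2)) := rfl
    rw [pow_zero, h0, Matrix.one_apply_eq]; norm_num
  | succ x ih =>
    intro hx h1
    have hx1 : x < n + 1 := by omega
    rw [pow_succ']
    refine mul_entry_pos n (M_nonneg n pL pR hL hR) (Mpow_nonneg n pL pR hL hR _)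
      _ (⟨x, hx1⟩, 0) _ ?_ (ih (by omega) hx1)
    rw [E2]
    linarith [(hL x (by omega)).2]

lemma claimB0_pad (x : ℕ) (hx : x ≤ n) (h1 : x < n + 1) (t : ℕ) (ht : x ≤ t) :
    0 < ((M n pL pR)^t) (⟨x,h1⟩,0) (0,0) := by
  have h : (M n pL pR)^t = (M n pL pR)^x * (M n pL pR)^(t-x) := by
    rw [← pow_add]; congr 1; omega
  rw [h]
  exact mul_entry_pos n (Mpow_nonneg n pL pR hL hR _) (Mpow_nonneg n pL pR hL hR _)
    _ (0,0) _ (claimB1 n pL pR hL hR x hx h1) (loop n pL pR hL hR _)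

lemma claimB (x : ℕ) (hx : x ≤ n) (h1 : x < n + 1) (c : Fin 2) :
    0 < ((M n pL pR)^(n+2)) (⟨x,h1⟩,c) (0,0) := by
  have hc : c = 0 ∨ c = 1 := by omega
  rcases hc with rfl | rfl
  · exact claimB0_pad n pL pR hL hR x hx h1 _ (by omega)
  · rcases Nat.lt_or_ge x n with hlt | hge
    · have hx2 : x + 1 < n + 1 := by omega
      rw [show n + 2 = 1 + (n+1) from by omega, pow_add, pow_one]
      exact mul_entry_pos n (M_nonneg n pL pR hL hR) (Mpow_nonneg n pL pR hL hR _)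
        _ (⟨x+1, hx2⟩, 0) _
        (by rw [E1L n pL pR x hlt]; exact (hL (x+1) (by omega)).1)
        (claimB0_pad n pL pR hL hR (x+1) (by omega) hx2 _ (by omega))
    · have hxeq : (⟨x, h1⟩ : Fin (n+1)) = ⟨n, Nat.lt_succ_self n⟩ := by
        apply Fin.ext; simp; omega
      rw [hxeq, show n + 2 = 1 + (n+1) from by omega, pow_add, pow_one]
      exact mul_entry_pos n (M_nonneg n pL pR hL hR) (Mpow_nonneg n pL pR hL hR _)
        _ (⟨n, Nat.lt_succ_self n⟩, 0) _
        (by rw [E3]; linarith [(hL n le_rfl).2])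
        (claimB0_pad n pL pR hL hR n le_rfl _ _ (by omega))

lemma Mpow_pos (p q : Fin (n+1) × Fin 2) : 0 < ((M n pL pR)^(2*n+3)) p q := by
  rcases p with ⟨⟨x, hx⟩, c⟩
  rcases q with ⟨⟨y, hy⟩, d⟩
  rw [show 2*n+3 = (n+2) + (n+1) from by omega, pow_add]
  exact mul_entry_pos n (Mpow_nonneg n pL pR hL hR _) (Mpow_nonneg n pL pR hL hR _)
    _ (0,0) _ (claimB n pL pR hL hR x (by omega) hx c)
    (claimA_pad n pL pR hL hR y hy d (n+1) (by omega))

end pos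
lemma l1_bound {ι : Type*} [Fintype ι] (A : Matrix ι ι ℝ) (c : ℝ) (h0 : ∀ p q, 0 ≤ A p q)
    (hc : ∀ q, ∑ p, A p q ≤ c) (v : ι → ℝ) :
    ∑ p, |A.mulVec v p| ≤ c * ∑ q, |v q| := by
  have step : ∀ p, |A.mulVec v p| ≤ ∑ q, A p q * |v q| := by
    intro p
    have : A.mulVec v p = ∑ q, A p q * v q := rfl
    rw [this]
    refine (Finset.abs_sum_le_sum_abs _ _).trans ?_
    refine Finset.sum_le_sum fun q _ => ?_
    rw [abs_mul, abs_of_nonneg (h0 p q)]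
  calc ∑ p, |A.mulVec v p| ≤ ∑ p, ∑ q, A p q * |v q| := Finset.sum_le_sum fun p _ => step p
    _ = ∑ q, (∑ p, A p q) * |v q| := by
        rw [Finset.sum_comm]
        exact Finset.sum_congr rfl fun q _ => (Finset.sum_mul _ _ _).symm
    _ ≤ ∑ q, c * |v q| := Finset.sum_le_sum fun q _ =>
        mul_le_mul_of_nonneg_right (hc q) (abs_nonneg _)
    _ = c * ∑ q, |v q| := (Finset.mul_sum _ _ _).symm

lemma contraction {ι : Type*} [Fintype ι] (A : Matrix ι ι ℝ) (ε : ℝ)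
    (he : ∀ p q, ε ≤ A p q) (hc : ∀ q, ∑ p, A p q = 1) (v : ι → ℝ) (hv : ∑ q, v q = 0) :
    ∑ p, |A.mulVec v p| ≤ (1 - (Fintype.card ι : ℝ) * ε) * ∑ q, |v q| := by
  set B : Matrix ι ι ℝ := Matrix.of (fun p q => A p q - ε) with hB
  have hBv : ∀ p, B.mulVec v p = A.mulVec v p := by
    intro p
    show ∑ q, (A p q - ε) * v q = ∑ q, A p q * v q
    simp only [sub_mul, Finset.sum_sub_distrib, ← Finset.mul_sum, hv, mul_zero, sub_zero]
  have h0 : ∀ p q, 0 ≤ B p q := fun p q => sub_nonneg.2 (he p q)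
  have hcB : ∀ q, ∑ p, B p q ≤ 1 - (Fintype.card ι : ℝ) * ε := by
    intro q
    show ∑ p, (A p q - ε) ≤ _
    rw [Finset.sum_sub_distrib, hc q, Finset.sum_const, Finset.card_univ, nsmul_eq_mul]
  calc ∑ p, |A.mulVec v p| = ∑ p, |B.mulVec v p| := by simp [hBv]
    _ ≤ _ := l1_bound B _ h0 hcB v

section ratio
variable (hL : ∀ y ≤ n, 0 < pL y ∧ pL y < 1) (hR : ∀ y ≤ n, 0 < pR y ∧ pR y < 1)
include hL hR

lemma ratio_pos (x : ℕ) (hx : x ≤ n) : 0 < crwRatio pL pR x := by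
  apply div_pos
  · exact Finset.prod_pos fun y hy => by
      have : y < x := Finset.mem_range.1 hy
      linarith [(hL y (by omega)).2]
  · exact Finset.prod_pos fun y hy => by
      have := Finset.mem_Icc.1 hy
      exact (hR y (by omega)).1

lemma ratio_succ (x : ℕ) (hx : x + 1 ≤ n) :
    pR (x+1) * crwRatio pL pR (x+1) = (1 - pL x) * crwRatio pL pR x := by
  have hd : (0:ℝ) < ∏ y ∈ Finset.Icc 1 x, pR y :=
    Finset.prod_pos fun y hy => (hR y (by have := Finset.mem_Icc.1 hy; omega)).1
  have hp : pR (x+1) ≠ 0 := ne_of_gt (hR (x+1) hx).1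
  rw [crwRatio, crwRatio, Finset.prod_range_succ, Finset.prod_Icc_succ_top (by omega)]
  field_simp

end ratio

noncomputable def Zd : ℝ := 1 + ∑ z ∈ Finset.Icc 1 n, crwRatio pL pR z

noncomputable def statV (ν : ℝ) : Fin (n+1) × Fin 2 → ℝ := fun p =>
  (if p.2 = 0 then pR (p.1 : ℕ) else 1 - pL (p.1 : ℕ)) * crwRatio pL pR (p.1 : ℕ) *
    ((1 - ν) * Zd n pL pR)⁻¹

section stat
variable (ν : ℝ)
variable (hL : ∀ y ≤ n, 0 < pL y ∧ pL y < 1) (hR : ∀ y ≤ n, 0 < pR y ∧ pR y < 1)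
    (hiso : ∀ x ≤ n, pL x - pR x = ν)
include hL hR

lemma Zpos : 0 < Zd n pL pR := by
  have : 0 ≤ ∑ z ∈ Finset.Icc 1 n, crwRatio pL pR z :=
    Finset.sum_nonneg fun z hz =>
      (ratio_pos n pL pR hL hR z (by have := Finset.mem_Icc.1 hz; omega)).le
  rw [Zd]; linarith

include hiso

lemma nu_lt_one : ν < 1 := by
  have h0 := hiso 0 (by omega)
  have := (hL 0 (by omega)).2
  have := (hR 0 (by omega)).1
  linarith

omit hL hR in
lemma key_comb (r K : ℝ) (x : ℕ) (hx : x ≤ n) :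
    pR x * r * K + (1 - pL x) * r * K = (1 - ν) * r * K := by
  have h := hiso x hx
  linear_combination (-(r*K)) * h

omit hL hR hiso in
lemma statV_eval (x : ℕ) (hx : x < n + 1) :
    statV n pL pR ν (⟨x, hx⟩, 0) = pR x * crwRatio pL pR x * ((1 - ν) * Zd n pL pR)⁻¹ ∧
    statV n pL pR ν (⟨x, hx⟩, 1) = (1 - pL x) * crwRatio pL pR x * ((1 - ν) * Zd n pL pR)⁻¹ := by
  constructor <;> simp [statV]

lemma statV_sum : ∑ p, statV n pL pR ν p = 1 := by
  have hZpos := Zpos n pL pR hL hR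
  have hν := nu_lt_one n pL pR ν hL hR hiso
  rw [Fintype.sum_prod_type]
  have hstep : ∀ x : Fin (n+1), ∑ c : Fin 2, statV n pL pR ν (x, c)
      = (1 - ν) * crwRatio pL pR (x : ℕ) * ((1-ν) * Zd n pL pR)⁻¹ := by
    intro x
    rw [Fin.sum_univ_two]
    have h0 := (statV_eval n pL pR ν (x:ℕ) (by omega)).1
    have h1 := (statV_eval n pL pR ν (x:ℕ) (by omega)).2
    have hx : (⟨(x:ℕ), by omega⟩ : Fin (n+1)) = x := by apply Fin.ext; simp
    rw [hx] at h0 h1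
    rw [h0, h1]
    exact key_comb n pL pR ν hiso _ _ (x:ℕ) (by omega)
  rw [Finset.sum_congr rfl fun x _ => hstep x]
  rw [← Finset.sum_mul, ← Finset.mul_sum]
  have hsum : ∑ x : Fin (n+1), crwRatio pL pR (x : ℕ) = Zd n pL pR := by
    rw [Fin.sum_univ_eq_sum_range, Finset.sum_range_succ']
    have h0 : crwRatio pL pR 0 = 1 := by simp [crwRatio]
    rw [h0, Zd, add_comm]
    congr 1
    rw [← Finset.Ico_add_one_right_eq_Icc, Finset.sum_Ico_eq_sum_range]
    norm_num
    exact Finset.sum_congr rfl fun i _ => by rw [add_comm]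
  rw [hsum]
  exact mul_inv_cancel₀ (ne_of_gt (mul_pos (by linarith) hZpos))

lemma statV_pair (x : ℕ) (hx : x ≤ n) (hx1 : x < n + 1) :
    statV n pL pR ν (⟨x, hx1⟩, 0) + statV n pL pR ν (⟨x, hx1⟩, 1)
      = crwLimit n pL pR x := by
  have hZpos := Zpos n pL pR hL hR
  have hν := nu_lt_one n pL pR ν hL hR hiso
  have hne1 : (1:ℝ) - ν ≠ 0 := by linarith
  obtain ⟨h0, h1⟩ := statV_eval n pL pR ν x hx1
  rw [h0, h1, key_comb n pL pR ν hiso _ _ x hx]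
  have hinv : (1-ν) * ((1-ν) * Zd n pL pR)⁻¹ = (Zd n pL pR)⁻¹ := by
    rw [mul_inv, ← mul_assoc, mul_inv_cancel₀ hne1, one_mul]
  have : crwLimit n pL pR x = crwRatio pL pR x * (Zd n pL pR)⁻¹ := rfl
  rw [this, ← hinv]
  ring

end stat

section fixedpoint
variable (ν : ℝ)
variable (hL : ∀ y ≤ n, 0 < pL y ∧ pL y < 1) (hR : ∀ y ≤ n, 0 < pR y ∧ pR y < 1)
    (hiso : ∀ x ≤ n, pL x - pR x = ν)

lemma crwC_eval0 (ψ) (y : Fin (n+1)) :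
    crwC n pL pR ψ (y, 0) = pL (y:ℕ) * ψ (y, 0) + pR (y:ℕ) * ψ (y, 1) := by
  simp [crwC]

lemma crwC_eval1 (ψ) (y : Fin (n+1)) :
    crwC n pL pR ψ (y, 1) = (1 - pL (y:ℕ)) * ψ (y, 0) + (1 - pR (y:ℕ)) * ψ (y, 1) := by
  simp [crwC]

include hL hR hiso in
lemma statV_fixed : crwU n pL pR (statV n pL pR ν) = statV n pL pR ν := by
  funext p
  rcases p with ⟨⟨x, hx⟩, c⟩
  rw [crwU, crwS_eq]
  have hc : c = 0 ∨ c = 1 := by omega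
  rcases hc with rfl | rfl
  · by_cases h0 : x = 0
    · subst h0
      have hσ : σ n ((⟨0, hx⟩ : Fin (n+1)), (0 : Fin 2)) = (0, 0) := by
        simp [σ]
      rw [hσ, crwC_eval0]
      obtain ⟨e0, e1⟩ := statV_eval n pL pR ν (0 : ℕ) hx
      have h00 : ((0 : Fin (n+1)) : ℕ) = 0 := rfl
      have hcast : ((0 : Fin (n+1)), (0 : Fin 2)) = ((⟨0, hx⟩ : Fin (n+1)), (0 : Fin 2)) := rfl
      have hcast1 : ((0 : Fin (n+1)), (1 : Fin 2)) = ((⟨0, hx⟩ : Fin (n+1)), (1 : Fin 2)) := rfl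
      rw [h00, hcast, hcast1, e0, e1]
      ring
    · have hxm : x - 1 < n + 1 := by omega
      have hσ : σ n ((⟨x, hx⟩ : Fin (n+1)), (0 : Fin 2)) = (⟨x - 1, hxm⟩, 1) := by
        simp [σ, h0]
      rw [hσ, crwC_eval1]
      obtain ⟨e0, e1⟩ := statV_eval n pL pR ν (x-1) hxm
      obtain ⟨f0, _⟩ := statV_eval n pL pR ν x hx
      simp only [Fin.val_mk] at *
      rw [e0, e1, f0]
      have key := ratio_succ n pL pR hL hR (x-1) (by omega)
      rw [show x - 1 + 1 = x from by omega] at key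
      linear_combination (-(((1 - ν) * Zd n pL pR)⁻¹)) * key
  · by_cases hn : x = n
    · have hσ : σ n ((⟨x, hx⟩ : Fin (n+1)), (1 : Fin 2)) = (⟨x, hx⟩, 1) := by
        simp [σ, hn]
      rw [hσ, crwC_eval1]
      obtain ⟨e0, e1⟩ := statV_eval n pL pR ν x hx
      simp only [Fin.val_mk] at *
      rw [e0, e1]
      ring
    · have hxp : x + 1 < n + 1 := by omega
      have hσ : σ n ((⟨x, hx⟩ : Fin (n+1)), (1 : Fin 2)) = (⟨x + 1, hxp⟩, 0) := by
        simp [σ, hn]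
      rw [hσ, crwC_eval0]
      obtain ⟨e0, e1⟩ := statV_eval n pL pR ν (x+1) hxp
      obtain ⟨_, f1⟩ := statV_eval n pL pR ν x hx
      simp only [Fin.val_mk] at *
      rw [e0, e1, f1]
      have key := ratio_succ n pL pR hL hR x (by omega)
      linear_combination (((1 - ν) * Zd n pL pR)⁻¹) * key

end fixedpoint

lemma iterU_sum (t : ℕ) (w) : ∑ p, (crwU n pL pR)^[t] w p = ∑ p, w p := by
  induction t generalizing w with
  | zero => rfl
  | succ t ih => rw [Function.iterate_succ_apply, ih, crwU_sum]

lemma Mpow_colsum (t : ℕ) (q) : ∑ p, ((M n pL pR)^t) p q = 1 := by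
  have h : ∀ p, ((M n pL pR)^t) p q
      = (crwU n pL pR)^[t] (fun k => if k = q then 1 else 0) p := by
    intro p
    rw [← M_pow_mulVec]
    have : ((M n pL pR)^t).mulVec (fun k => if k = q then 1 else 0) p
        = ∑ r, ((M n pL pR)^t) p r * (if r = q then 1 else 0) := rfl
    rw [this]
    simp
  rw [Finset.sum_congr rfl fun p _ => h p, iterU_sum]
  simp

end CRW
open Filter Topology

theorem stmt19 (n : ℕ) (hn : 1 ≤ n) (pL pR : ℕ → ℝ) (ν : ℝ)
    (hL : ∀ y ≤ n, 0 < pL y ∧ pL y < 1) (hR : ∀ y ≤ n, 0 < pR y ∧ pR y < 1)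
    (hν0 : 0 < |ν|) (hν1 : |ν| < 1) (hiso : ∀ x ≤ n, pL x - pR x = ν)
    (hB : ν < 0 →
      ∀ (lam : ℝ) (v : Fin (n + 1) → ℝ), v ≠ 0 →
        (jacB n (fun x => Real.sqrt 2 * (1 - pL x) / (1 - ν))
            (fun x => -(Real.sqrt 2 * pR x) / (1 - ν))).mulVec v = lam • v →
        Real.sqrt (-4 * ν) / (1 - ν) < |lam| ∧ |lam| ≤ 1) :
    ∀ φ : Fin (n + 1) × Fin 2 → ℝ, (∀ p, 0 ≤ φ p) → ∑ p, φ p = 1 →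
      ∀ x : Fin (n + 1),
        Tendsto
          (fun t : ℕ =>
            (crwU n pL pR)^[t] φ (x, 0) + (crwU n pL pR)^[t] φ (x, 1))
          atTop (𝓝 (crwLimit n pL pR (x : ℕ))) := by
  intro φ hφ hsum x
  clear hν0 hν1 hB hn hφ
  set π : Fin (n+1) × Fin 2 → ℝ := CRW.statV n pL pR ν with hπ
  have hfix : crwU n pL pR π = π := CRW.statV_fixed n pL pR ν hL hR hiso
  have hπsum : ∑ p, π p = 1 := CRW.statV_sum n pL pR ν hL hR hiso
  set K : ℕ := 2 * n + 3 with hK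
  set A : Matrix (Fin (n+1) × Fin 2) (Fin (n+1) × Fin 2) ℝ := (CRW.M n pL pR) ^ K with hA
  obtain ⟨m0, hm0⟩ := Finite.exists_min (fun pq : (Fin (n+1) × Fin 2) × (Fin (n+1) × Fin 2) =>
    A pq.1 pq.2)
  set ε : ℝ := A m0.1 m0.2 with hε
  have hεpos : 0 < ε := CRW.Mpow_pos n pL pR hL hR m0.1 m0.2
  have hεle : ∀ p q, ε ≤ A p q := fun p q => hm0 (p, q)
  set D : ℝ := (Fintype.card (Fin (n+1) × Fin 2) : ℝ) with hD
  have hDpos : 0 < D := by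
    rw [hD]
    exact_mod_cast Fintype.card_pos
  set ρ : ℝ := 1 - D * ε with hρ
  have hAcol : ∀ q, ∑ p, A p q = 1 := fun q => CRW.Mpow_colsum n pL pR K q
  have hρ0 : 0 ≤ ρ := by
    have h1 := hAcol (0, 0)
    have h2 : D * ε ≤ ∑ p, A p (0, 0) := by
      calc D * ε = ∑ _p : Fin (n+1) × Fin 2, ε := by
            rw [Finset.sum_const, Finset.card_univ, nsmul_eq_mul, hD]
        _ ≤ ∑ p, A p (0, 0) := Finset.sum_le_sum fun p _ => hεle p (0, 0)
    rw [hρ]; linarith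
  have hρ1 : ρ < 1 := by
    have := mul_pos hDpos hεpos
    rw [hρ]; linarith
  set v : Fin (n+1) × Fin 2 → ℝ := φ - π with hv
  have hvsum : ∑ q, v q = 0 := by
    rw [hv]
    simp only [Pi.sub_apply]
    rw [Finset.sum_sub_distrib, hsum, hπsum, sub_self]
  have hvtsum : ∀ t, ∑ q, ((CRW.M n pL pR)^t).mulVec v q = 0 := by
    intro t
    rw [CRW.M_pow_mulVec, CRW.iterU_sum, hvsum]
  set g : ℕ → ℝ := fun t => ∑ p, |((CRW.M n pL pR)^t).mulVec v p| with hg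
  have hg_nonneg : ∀ t, 0 ≤ g t := fun t => Finset.sum_nonneg fun p _ => abs_nonneg _
  have hmono : ∀ t, g t ≤ g 0 := by
    intro t
    induction t with
    | zero => exact le_rfl
    | succ t ih =>
      refine le_trans ?_ ih
      have hrw : ((CRW.M n pL pR)^(t+1)).mulVec v
          = (CRW.M n pL pR).mulVec (((CRW.M n pL pR)^t).mulVec v) := by
        rw [Matrix.mulVec_mulVec, ← pow_succ']
      rw [hg]
      simp only [hrw]
      have := CRW.l1_bound (CRW.M n pL pR) 1 (CRW.M_nonneg n pL pR hL hR)
        (fun q => by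
          have h := CRW.Mpow_colsum n pL pR 1 q
          rw [pow_one] at h
          exact le_of_eq h)
        (((CRW.M n pL pR)^t).mulVec v)
      simpa using this
  have hKpos : 0 < K := by omega
  have claim : ∀ t, g t ≤ ρ ^ (t / K) * g 0 := by
    intro t
    induction t using Nat.strong_induction_on with
    | _ t ih =>
      by_cases ht : t < K
      · rw [Nat.div_eq_of_lt ht, pow_zero, one_mul]
        exact hmono t
      · push_neg at ht
        have hst : t - K < t := by omega
        have hrw : ((CRW.M n pL pR)^t).mulVec v
            = A.mulVec (((CRW.M n pL pR)^(t - K)).mulVec v) := by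
          rw [hA, Matrix.mulVec_mulVec, ← pow_add, Nat.add_sub_cancel' ht]
        have hcontr : g t ≤ ρ * g (t - K) := by
          rw [hg]
          simp only [hrw]
          have := CRW.contraction A ε hεle hAcol
            (((CRW.M n pL pR)^(t - K)).mulVec v) (hvtsum (t - K))
          rw [hρ, hD]
          exact this
        have := ih (t - K) hst
        calc g t ≤ ρ * g (t - K) := hcontr
          _ ≤ ρ * (ρ ^ ((t - K) / K) * g 0) := by
              refine mul_le_mul_of_nonneg_left this hρ0
          _ = ρ ^ ((t - K) / K + 1) * g 0 := by ring
          _ = ρ ^ (t / K) * g 0 := by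
              rw [Nat.div_eq_sub_div hKpos ht]
  have hdiv : Tendsto (fun t : ℕ => t / K) atTop atTop := by
    rw [Filter.tendsto_atTop_atTop]
    intro b
    refine ⟨K * b, fun a ha => ?_⟩
    rw [Nat.le_div_iff_mul_le hKpos]
    calc b * K = K * b := by ring
      _ ≤ a := ha
  have hgz : Tendsto g atTop (𝓝 0) := by
    have h1 : Tendsto (fun t : ℕ => ρ ^ (t / K) * g 0) atTop (𝓝 (0 * g 0)) :=
      Filter.Tendsto.mul_const (g 0)
        ((tendsto_pow_atTop_nhds_zero_of_lt_one hρ0 hρ1).comp hdiv)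
    rw [zero_mul] at h1
    exact squeeze_zero hg_nonneg claim h1
  have hfixM : ∀ t, ((CRW.M n pL pR)^t).mulVec π = π := by
    intro t
    rw [CRW.M_pow_mulVec]
    exact Function.iterate_fixed hfix t
  have hcoord : ∀ p : Fin (n+1) × Fin 2,
      Tendsto (fun t => (crwU n pL pR)^[t] φ p) atTop (𝓝 (π p)) := by
    intro p
    rw [← tendsto_sub_nhds_zero_iff]
    have hdiff : ∀ t, (crwU n pL pR)^[t] φ p - π p = ((CRW.M n pL pR)^t).mulVec v p := by
      intro t
      rw [hv, Matrix.mulVec_sub, CRW.M_pow_mulVec, hfixM]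
      simp
    simp only [hdiff]
    refine squeeze_zero_norm (fun t => ?_) hgz
    rw [Real.norm_eq_abs, hg]
    exact Finset.single_le_sum (f := fun q => |((CRW.M n pL pR)^t).mulVec v q|)
      (fun q _ => abs_nonneg _) (Finset.mem_univ p)
  have hxval : (⟨(x : ℕ), by omega⟩ : Fin (n+1)) = x := by
    apply Fin.ext; simp
  have hlim : π (x, 0) + π (x, 1) = crwLimit n pL pR (x : ℕ) := by
    have := CRW.statV_pair n pL pR ν hL hR hiso (x : ℕ) (by omega) (by omega)
    rw [hxval] at this
    exact this
  rw [← hlim]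
  exact (hcoord (x, 0)).add (hcoord (x, 1))
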